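/- For the RK-RR iteration (randomized Kaczmarz with multiplicative weight decay factor μ ∈ (0,1)), the conditional expectation satisfies E[x_s - x_μ | x_r] = μ^{s-r} (I - A^T A / ||A||_F^2)^{s-r} (x_r - x_μ) for r < s, where x_μ is the ridge-regularized solution with λ = (1-μ)/μ · ||A||_F^2. -/

import Mathlib

open Matrix Finset
noncomputable section

/-- Squared Euclidean norm of a vector. -/
def vnormSq {k : ℕ} (x : Fin k → ℝ) : ℝ := ∑ i, x i ^ 2

/-- Squared Frobenius norm of a matrix. -/
def frobSq {n d : ℕ} (A : Matrix (Fin n) (Fin d) ℝ) : ℝ := ∑ i, vnormSq (A i)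

/-- Row sampling probability ‖a_i‖²/‖A‖_F² used by randomized Kaczmarz. -/
def rowProb {n d : ℕ} (A : Matrix (Fin n) (Fin d) ℝ) (i : Fin n) : ℝ := vnormSq (A i) / frobSq A

/-- Spectral norm (ℓ²-operator norm) of a matrix. -/
def matSpectralNorm {n d : ℕ} (M : Matrix (Fin n) (Fin d) ℝ) : ℝ :=
  ‖LinearMap.toContinuousLinearMap (Matrix.toEuclideanLin M)‖

/-- The four Penrose conditions characterizing the Moore–Penrose pseudoinverse. -/
def IsMoorePenrose {n d : ℕ} (A : Matrix (Fin n) (Fin d) ℝ) (Ap : Matrix (Fin d) (Fin n) ℝ) : Prop :=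
  A * Ap * A = A ∧ Ap * A * Ap = Ap ∧ (A * Ap)ᵀ = A * Ap ∧ (Ap * A)ᵀ = Ap * A

/-- Demmel condition number κ_dem = ‖A⁺‖ ‖A‖_F. -/
def kdem {n d : ℕ} (A : Matrix (Fin n) (Fin d) ℝ) (Ap : Matrix (Fin d) (Fin n) ℝ) : ℝ :=
  matSpectralNorm Ap * Real.sqrt (frobSq A)

/-- One randomized Kaczmarz update using row i. -/
def rkStep {n d : ℕ} (A : Matrix (Fin n) (Fin d) ℝ) (b : Fin n → ℝ) (i : Fin n) (x : Fin d → ℝ) :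
    Fin d → ℝ := x + ((b i - A i ⬝ᵥ x) / vnormSq (A i)) • A i

/-- Randomized Kaczmarz iterates along a fixed path ω of row indices. -/
def rkSeq {n d : ℕ} (A : Matrix (Fin n) (Fin d) ℝ) (b : Fin n → ℝ) (x0 : Fin d → ℝ)
    (ω : ℕ → Fin n) : ℕ → Fin d → ℝ
  | 0 => x0
  | t + 1 => rkStep A b (ω t) (rkSeq A b x0 ω t)

/-- Extend a finite path of indices to an infinite one. -/
def extendPath {n T : ℕ} [NeZero n] (ω : Fin T → Fin n) : ℕ → Fin n :=
  fun s => if h : s < T then ω ⟨s, h⟩ else 0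

/-- Probability of a finite path of i.i.d. row indices. -/
def pathWeight {n d T : ℕ} (A : Matrix (Fin n) (Fin d) ℝ) (ω : Fin T → Fin n) : ℝ :=
  ∏ t, rowProb A (ω t)

/-- The expected one-step Kaczmarz contraction matrix I - AᵀA/‖A‖_F². -/
def kacMat {n d : ℕ} (A : Matrix (Fin n) (Fin d) ℝ) : Matrix (Fin d) (Fin d) ℝ :=
  1 - (frobSq A)⁻¹ • (Aᵀ * A)

/-- x lies in the row space range(Aᵀ). -/
def inRowSpace {n d : ℕ} (A : Matrix (Fin n) (Fin d) ℝ) (x : Fin d → ℝ) : Prop :=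
  ∃ u : Fin n → ℝ, x = Aᵀ *ᵥ u

/-- RK-RR iterates: Kaczmarz step followed by weight decay by μ. -/
def rrSeq {n d : ℕ} (A : Matrix (Fin n) (Fin d) ℝ) (b : Fin n → ℝ) (μ : ℝ) (x0 : Fin d → ℝ)
    (ω : ℕ → Fin n) : ℕ → Fin d → ℝ
  | 0 => x0
  | t + 1 => μ • rkStep A b (ω t) (rrSeq A b μ x0 ω t)

/-- Orthogonal projection step (I - a aᵀ/‖a‖²) x for row a = A i. -/
def projStep {n d : ℕ} (A : Matrix (Fin n) (Fin d) ℝ) (i : Fin n) (x : Fin d → ℝ) : Fin d → ℝ :=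
  x - ((A i ⬝ᵥ x) / vnormSq (A i)) • A i

/-- RK-RR bias sequence m_{t+1} = μ (I - a aᵀ/‖a‖²) m_t. -/
def biasSeq {n d : ℕ} (A : Matrix (Fin n) (Fin d) ℝ) (μ : ℝ) (m0 : Fin d → ℝ)
    (ω : ℕ → Fin n) : ℕ → Fin d → ℝ
  | 0 => m0
  | t + 1 => μ • projStep A (ω t) (biasSeq A μ m0 ω t)

/-- RK-RR variance sequence v_{t+1} = μ(I - aaᵀ/‖a‖²)v_t + μ (b_i - aᵀx_μ)a/‖a‖² - (1-μ)x_μ. -/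
def varSeq {n d : ℕ} (A : Matrix (Fin n) (Fin d) ℝ) (b : Fin n → ℝ) (μ : ℝ) (xmu : Fin d → ℝ)
    (ω : ℕ → Fin n) : ℕ → Fin d → ℝ
  | 0 => 0
  | t + 1 => μ • projStep A (ω t) (varSeq A b μ xmu ω t)
      + (μ * ((b (ω t) - A (ω t) ⬝ᵥ xmu) / vnormSq (A (ω t)))) • A (ω t)
      - (1 - μ) • xmu

/-- Covariance matrix Σ = I_m + v 1_m 1_mᵀ. -/
def covM (m : ℕ) (v : ℝ) : Matrix (Fin m) (Fin m) ℝ := 1 + v • Matrix.of fun _ _ => 1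

/-- Block Σ_{S,T} of the covariance matrix Σ = I + v 1 1ᵀ. -/
def subBlock {m : ℕ} (v : ℝ) (S T : Finset (Fin m)) : Matrix ↥S ↥T ℝ :=
  (covM m v).submatrix (fun i => i.1) (fun j => j.1)

/-- A deterministic adaptive algorithm that accesses at most t entries of b
(given full access to A) and outputs an estimate of the least-squares solution. -/
structure RowAccessAlg (d t : ℕ) where
  query : (n : ℕ) → Matrix (Fin n) (Fin d) ℝ → (j : Fin t) → (Fin (j : ℕ) → ℝ) → Fin n
  output : (n : ℕ) → Matrix (Fin n) (Fin d) ℝ → (Fin t → ℝ) → Fin d → ℝ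

/-- The successive answers to the algorithm's adaptive queries. -/
def RowAccessAlg.answers {d t : ℕ} (alg : RowAccessAlg d t) (n : ℕ)
    (A : Matrix (Fin n) (Fin d) ℝ) (b : Fin n → ℝ) : (j : ℕ) → j < t → ℝ
  | j, h => b (alg.query n A ⟨j, h⟩ fun i => alg.answers n A b i (i.isLt.trans h))
  termination_by j _ => j

/-- The algorithm's output estimate on the problem (A, b). -/
def RowAccessAlg.run {d t : ℕ} (alg : RowAccessAlg d t) (n : ℕ)
    (A : Matrix (Fin n) (Fin d) ℝ) (b : Fin n → ℝ) : Fin d → ℝ :=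
  alg.output n A fun j => alg.answers n A b j j.isLt

section Aux
variable {n d : ℕ}

lemma vnormSq_pos (A : Matrix (Fin n) (Fin d) ℝ) (hrows : ∀ i, A i ≠ 0) (i : Fin n) :
    0 < vnormSq (A i) := by
  have h := hrows i
  have : ∃ j, A i j ≠ 0 := by
    by_contra hc; push_neg at hc; exact h (funext hc)
  obtain ⟨j, hj⟩ := this
  have h2 : 0 < (A i j) ^ 2 := by positivity
  have h3 := Finset.single_le_sum (f := fun j => A i j ^ 2) (fun k _ => sq_nonneg _) (Finset.mem_univ j)
  calc (0:ℝ) < A i j ^ 2 := h2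
    _ ≤ vnormSq (A i) := h3

lemma frobSq_pos [NeZero n] (A : Matrix (Fin n) (Fin d) ℝ) (hrows : ∀ i, A i ≠ 0) :
    0 < frobSq A :=
  Finset.sum_pos (fun i _ => vnormSq_pos A hrows i) Finset.univ_nonempty

lemma sum_rowProb [NeZero n] (A : Matrix (Fin n) (Fin d) ℝ) (hrows : ∀ i, A i ≠ 0) :
    ∑ i : Fin n, rowProb A i = 1 := by
  have hF := (frobSq_pos A hrows).ne'
  simp only [rowProb, div_eq_mul_inv, ← Finset.sum_mul]
  rw [show ∑ i : Fin n, vnormSq (A i) = frobSq A from rfl, mul_inv_cancel₀ hF]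

lemma transpose_mulVec_eq_sum (A : Matrix (Fin n) (Fin d) ℝ) (w : Fin n → ℝ) :
    Aᵀ *ᵥ w = ∑ i, w i • A i := by
  funext j
  simp [Matrix.mulVec, dotProduct, Matrix.transpose_apply, Finset.sum_apply, mul_comm]

lemma one_step [NeZero n] (A : Matrix (Fin n) (Fin d) ℝ) (b : Fin n → ℝ)
    (hrows : ∀ i, A i ≠ 0) (μ : ℝ) (hμ0 : 0 < μ)
    (lam : ℝ) (hlam : lam = (1 - μ) / μ * frobSq A)
    (xmu : Fin d → ℝ) (hxmu : Aᵀ *ᵥ (b - A *ᵥ xmu) = lam • xmu)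
    (x : Fin d → ℝ) :
    ∑ i : Fin n, rowProb A i • (μ • rkStep A b i x - xmu)
      = μ • (kacMat A *ᵥ (x - xmu)) := by
  have hF := (frobSq_pos A hrows).ne'
  have key : μ / frobSq A * lam = 1 - μ := by
    rw [hlam]; field_simp
  have step1 : ∀ i : Fin n, rowProb A i • (μ • rkStep A b i x - xmu)
      = rowProb A i • (μ • x - xmu) + (μ / frobSq A * (b i - A i ⬝ᵥ x)) • A i := by
    intro i
    have hv := (vnormSq_pos A hrows i).ne'
    have hc : rowProb A i * (μ * ((b i - A i ⬝ᵥ x) / vnormSq (A i)))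
        = μ / frobSq A * (b i - A i ⬝ᵥ x) := by
      rw [rowProb]; field_simp
    simp only [rkStep, smul_add, smul_smul]
    rw [add_sub_right_comm, smul_add, smul_smul, hc]
  rw [Finset.sum_congr rfl (fun i _ => step1 i), Finset.sum_add_distrib,
    ← Finset.sum_smul, sum_rowProb A hrows, one_smul]
  have step2 : ∑ i : Fin n, (μ / frobSq A * (b i - A i ⬝ᵥ x)) • A i
      = (μ / frobSq A) • (Aᵀ *ᵥ (b - A *ᵥ x)) := by
    rw [transpose_mulVec_eq_sum, Finset.smul_sum]
    refine Finset.sum_congr rfl fun i _ => ?_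
    rw [smul_smul]
    rfl
  rw [step2]
  have step3 : Aᵀ *ᵥ (b - A *ᵥ x) = lam • xmu - Aᵀ *ᵥ (A *ᵥ (x - xmu)) := by
    have hb : b - A *ᵥ x = (b - A *ᵥ xmu) - A *ᵥ (x - xmu) := by
      rw [Matrix.mulVec_sub]; abel
    rw [hb, Matrix.mulVec_sub, hxmu]
  rw [step3]
  have step4 : kacMat A *ᵥ (x - xmu) = (x - xmu) - (frobSq A)⁻¹ • (Aᵀ *ᵥ (A *ᵥ (x - xmu))) := by
    simp [kacMat, Matrix.sub_mulVec, Matrix.smul_mulVec, ← Matrix.mulVec_mulVec]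
  rw [step4, smul_sub, smul_smul, key]
  rw [smul_sub, smul_smul]
  have : μ * (frobSq A)⁻¹ = μ / frobSq A := (div_eq_mul_inv μ _).symm
  rw [this]
  module

lemma rrSeq_congr (A : Matrix (Fin n) (Fin d) ℝ) (b : Fin n → ℝ) (μ : ℝ) (x0 : Fin d → ℝ)
    (ω ω' : ℕ → Fin n) (m : ℕ) (h : ∀ t, t < m → ω t = ω' t) :
    rrSeq A b μ x0 ω m = rrSeq A b μ x0 ω' m := by
  induction m with
  | zero => rfl
  | succ m ih =>
    simp only [rrSeq, h m (Nat.lt_succ_self m), ih (fun t ht => h t (Nat.lt_succ_of_lt ht))]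

lemma extendPath_snoc_lt [NeZero n] {k : ℕ} (ω : Fin k → Fin n) (i : Fin n) (t : ℕ) (ht : t < k) :
    extendPath (Fin.snoc ω i) t = extendPath ω t := by
  simp [extendPath, ht, Nat.lt_succ_of_lt ht, Fin.snoc, Fin.castLT]

lemma extendPath_snoc_last [NeZero n] {k : ℕ} (ω : Fin k → Fin n) (i : Fin n) :
    extendPath (Fin.snoc ω i) k = i := by
  simp [extendPath, Fin.snoc]

lemma pathWeight_snoc {k : ℕ} (A : Matrix (Fin n) (Fin d) ℝ) (ω : Fin k → Fin n) (i : Fin n) :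
    pathWeight A (Fin.snoc ω i) = pathWeight A ω * rowProb A i := by
  simp [pathWeight, Fin.prod_univ_castSucc]

lemma main_aux [NeZero n]
    (A : Matrix (Fin n) (Fin d) ℝ) (b : Fin n → ℝ) (hrows : ∀ i, A i ≠ 0)
    (μ : ℝ) (hμ0 : 0 < μ)
    (lam : ℝ) (hlam : lam = (1 - μ) / μ * frobSq A)
    (xmu : Fin d → ℝ) (hxmu : Aᵀ *ᵥ (b - A *ᵥ xmu) = lam • xmu)
    (y : Fin d → ℝ) (k : ℕ) :
    ∑ ω : Fin k → Fin n, pathWeight A ω • (rrSeq A b μ y (extendPath ω) k - xmu)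
      = μ ^ k • ((kacMat A ^ k) *ᵥ (y - xmu)) := by
  induction k with
  | zero =>
    simp [pathWeight, rrSeq]
  | succ k ih =>
    rw [← Equiv.sum_comp (Fin.snocEquiv (fun _ => Fin n))]
    rw [Fintype.sum_prod_type]
    have hterm : ∀ (i : Fin n) (ω : Fin k → Fin n),
        pathWeight A (Fin.snocEquiv (fun _ => Fin n) (i, ω))
          • (rrSeq A b μ y (extendPath (Fin.snocEquiv (fun _ => Fin n) (i, ω))) (k+1) - xmu)
        = pathWeight A ω • (rowProb A i • (μ • rkStep A b i (rrSeq A b μ y (extendPath ω) k) - xmu)) := by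
      intro i ω
      have h1 : (Fin.snocEquiv (fun _ => Fin n) (i, ω) : Fin (k+1) → Fin n) = Fin.snoc ω i := rfl
      rw [h1, pathWeight_snoc]
      have h2 : rrSeq A b μ y (extendPath (Fin.snoc ω i)) (k+1)
          = μ • rkStep A b i (rrSeq A b μ y (extendPath ω) k) := by
        show μ • rkStep A b (extendPath (Fin.snoc ω i) k) (rrSeq A b μ y (extendPath (Fin.snoc ω i)) k) = _
        rw [extendPath_snoc_last,
          rrSeq_congr A b μ y _ (extendPath ω) k (fun t ht => extendPath_snoc_lt ω i t ht)]
      rw [h2, mul_smul]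
    calc ∑ i : Fin n, ∑ ω : Fin k → Fin n,
          pathWeight A (Fin.snocEquiv (fun _ => Fin n) (i, ω))
            • (rrSeq A b μ y (extendPath (Fin.snocEquiv (fun _ => Fin n) (i, ω))) (k+1) - xmu)
        = ∑ ω : Fin k → Fin n, ∑ i : Fin n,
            pathWeight A ω • (rowProb A i • (μ • rkStep A b i (rrSeq A b μ y (extendPath ω) k) - xmu)) := by
          rw [Finset.sum_comm]
          exact Finset.sum_congr rfl fun ω _ => Finset.sum_congr rfl fun i _ => hterm i ω
      _ = ∑ ω : Fin k → Fin n,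
            pathWeight A ω • (μ • (kacMat A *ᵥ (rrSeq A b μ y (extendPath ω) k - xmu))) := by
          refine Finset.sum_congr rfl fun ω _ => ?_
          rw [← Finset.smul_sum, one_step A b hrows μ hμ0 lam hlam xmu hxmu]
      _ = μ • (kacMat A *ᵥ (∑ ω : Fin k → Fin n,
            pathWeight A ω • (rrSeq A b μ y (extendPath ω) k - xmu))) := by
          have hmv : kacMat A *ᵥ (∑ ω : Fin k → Fin n,
              pathWeight A ω • (rrSeq A b μ y (extendPath ω) k - xmu))
              = ∑ ω : Fin k → Fin n,
                kacMat A *ᵥ (pathWeight A ω • (rrSeq A b μ y (extendPath ω) k - xmu)) := by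
            rw [← Matrix.mulVecLin_apply, map_sum]
            simp only [Matrix.mulVecLin_apply]
          rw [hmv, Finset.smul_sum]
          exact Finset.sum_congr rfl fun ω _ => by
            rw [Matrix.mulVec_smul, smul_comm]
      _ = μ ^ (k+1) • ((kacMat A ^ (k+1)) *ᵥ (y - xmu)) := by
          rw [ih, Matrix.mulVec_smul, smul_smul, Matrix.mulVec_mulVec, ← pow_succ', ← pow_succ']

end Aux

/-- multi-step conditional expectation for RK-RR:
E[x_s - x_μ | x_r] = μ^{s-r} (I - AᵀA/‖A‖_F²)^{s-r} (x_r - x_μ), where x_μ is the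
ridge solution with λ = (1-μ)/μ ‖A‖_F², characterized by Aᵀ(b - Ax_μ) = λ x_μ.
Here `y` plays the role of x_r and `k = s - r ≥ 1`. -/
theorem rkrr_multistep_expectation {n d : ℕ} [NeZero n]
    (A : Matrix (Fin n) (Fin d) ℝ) (b : Fin n → ℝ) (hrows : ∀ i, A i ≠ 0)
    (μ : ℝ) (hμ0 : 0 < μ) (hμ1 : μ < 1)
    (lam : ℝ) (hlam : lam = (1 - μ) / μ * frobSq A)
    (xmu : Fin d → ℝ) (hxmu : Aᵀ *ᵥ (b - A *ᵥ xmu) = lam • xmu)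
    (y : Fin d → ℝ) (k : ℕ) (hk : 0 < k) :
    ∑ ω : Fin k → Fin n, pathWeight A ω • (rrSeq A b μ y (extendPath ω) k - xmu)
      = μ ^ k • ((kacMat A ^ k) *ᵥ (y - xmu)) := main_aux A b hrows μ hμ0 lam hlam xmu hxmu y k
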